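/- Let μ be a finite positive Borel measure on ℝ and define x(ω) := sup{x : x + μ((-∞, x]) < ω}. Then for every ω ∈ ℝ there exists θ ∈ [0,1] such that ω = x(ω) + μ((-∞, x(ω))) + θ·μ({x(ω)}). -/

import Mathlib

open MeasureTheory

/-- ω = x(ω) + μ((-∞, x(ω))) + θ·μ({x(ω)}) for some θ ∈ [0,1]. -/
theorem stmt7 (μ : Measure ℝ) [IsFiniteMeasure μ]
    (X : ℝ → ℝ)
    (hX : ∀ ω, X ω = sSup {x : ℝ | x + (μ (Set.Iic x)).toReal < ω}) :
    ∀ ω : ℝ, ∃ θ ∈ Set.Icc (0 : ℝ) 1,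
      ω = X ω + (μ (Set.Iio (X ω))).toReal + θ * (μ {X ω}).toReal := by
  intro ω
  set s := X ω with hs
  have hXs : s = sSup {x : ℝ | x + (μ (Set.Iic x)).toReal < ω} := hX ω
  have hμt : ∀ t : Set ℝ, μ t ≠ ⊤ := fun t => measure_ne_top μ t
  have hmono : ∀ ⦃x y : ℝ⦄, x ≤ y →
      x + (μ (Set.Iic x)).toReal ≤ y + (μ (Set.Iic y)).toReal := by
    intro x y h
    exact add_le_add h (ENNReal.toReal_mono (hμt _) (measure_mono (Set.Iic_subset_Iic.2 h)))
  have hne : Set.Nonempty {x : ℝ | x + (μ (Set.Iic x)).toReal < ω} := by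
    refine ⟨ω - 1 - (μ Set.univ).toReal, ?_⟩
    have h1 : (μ (Set.Iic (ω - 1 - (μ Set.univ).toReal))).toReal ≤ (μ Set.univ).toReal :=
      ENNReal.toReal_mono (hμt _) (measure_mono (Set.subset_univ _))
    simp only [Set.mem_setOf_eq]
    linarith
  have hbdd : BddAbove {x : ℝ | x + (μ (Set.Iic x)).toReal < ω} := by
    refine ⟨ω, fun x hx => ?_⟩
    simp only [Set.mem_setOf_eq] at hx
    have h0 : (0:ℝ) ≤ (μ (Set.Iic x)).toReal := ENNReal.toReal_nonneg
    linarith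
  -- every x < s is in the set
  have hlt : ∀ x < s, x + (μ (Set.Iic x)).toReal < ω := by
    intro x hx
    rw [hXs] at hx
    obtain ⟨y, hy, hxy⟩ := exists_lt_of_lt_csSup hne hx
    exact lt_of_le_of_lt (hmono hxy.le) hy
  -- lower bound: s + μ(Iio s) ≤ ω
  have hlow : s + (μ (Set.Iio s)).toReal ≤ ω := by
    have hu : ∀ n : ℕ, s - 1/(n+1) < s := by
      intro n
      have : (0:ℝ) < 1/(n+1) := by positivity
      linarith
    have hunion : Set.Iio s = ⋃ n : ℕ, Set.Iic (s - 1/(n+1)) := by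
      ext x
      simp only [Set.mem_Iio, Set.mem_iUnion, Set.mem_Iic]
      constructor
      · intro hx
        obtain ⟨n, hn⟩ := exists_nat_one_div_lt (show (0:ℝ) < s - x by linarith)
        exact ⟨n, by linarith⟩
      · rintro ⟨n, hn⟩
        have := hu n
        linarith
    have hmonoset : Monotone (fun n : ℕ => Set.Iic (s - 1/(n+1))) := by
      intro m n hmn
      apply Set.Iic_subset_Iic.2
      have hmn' : (m:ℝ) ≤ n := Nat.cast_le.2 hmn
      have : (1:ℝ)/(n+1) ≤ 1/(m+1) := by
        apply one_div_le_one_div_of_le (by positivity)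
        linarith
      linarith
    have htend : Filter.Tendsto (fun n : ℕ => μ (Set.Iic (s - 1/(n+1)))) Filter.atTop
        (nhds (μ (Set.Iio s))) := by
      rw [hunion]
      exact tendsto_measure_iUnion_atTop hmonoset
    have htendR : Filter.Tendsto (fun n : ℕ => (μ (Set.Iic (s - 1/(n+1)))).toReal)
        Filter.atTop (nhds (μ (Set.Iio s)).toReal) :=
      (ENNReal.tendsto_toReal (hμt _)).comp htend
    have htendR2 : Filter.Tendsto (fun n : ℕ => ω - s + 1/((n:ℝ)+1)) Filter.atTop
        (nhds (ω - s)) := by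
      have := tendsto_one_div_add_atTop_nhds_zero_nat (𝕜 := ℝ)
      have h2 := Filter.Tendsto.const_add (ω - s) this
      simpa using h2
    have hle : (μ (Set.Iio s)).toReal ≤ ω - s := by
      refine le_of_tendsto_of_tendsto' htendR htendR2 (fun n => ?_)
      have h1 := hlt (s - 1/(n+1)) (hu n)
      linarith
    linarith
  -- upper bound: ω ≤ s + μ(Iic s)
  have hup : ω ≤ s + (μ (Set.Iic s)).toReal := by
    by_contra h
    push_neg at h
    have hv : ∀ n : ℕ, s < s + 1/((n:ℝ)+1) := by
      intro n
      have : (0:ℝ) < 1/(n+1) := by positivity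
      linarith
    have hinter : Set.Iic s = ⋂ n : ℕ, Set.Iic (s + 1/(n+1)) := by
      ext x
      simp only [Set.mem_Iic, Set.mem_iInter]
      constructor
      · intro hx n
        have : (0:ℝ) < 1/((n:ℝ)+1) := by positivity
        linarith
      · intro hx
        by_contra hxs
        push_neg at hxs
        obtain ⟨n, hn⟩ := exists_nat_one_div_lt (show (0:ℝ) < x - s by linarith)
        have := hx n
        linarith
    have hanti : Antitone (fun n : ℕ => Set.Iic (s + 1/(n+1))) := by
      intro m n hmn
      apply Set.Iic_subset_Iic.2
      have hmn' : (m:ℝ) ≤ n := Nat.cast_le.2 hmn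
      have : (1:ℝ)/(n+1) ≤ 1/(m+1) := by
        apply one_div_le_one_div_of_le (by positivity)
        linarith
      linarith
    have htend : Filter.Tendsto (fun n : ℕ => μ (Set.Iic (s + 1/(n+1)))) Filter.atTop
        (nhds (μ (Set.Iic s))) := by
      rw [hinter]
      exact tendsto_measure_iInter_atTop (fun n => (measurableSet_Iic).nullMeasurableSet)
        hanti ⟨0, hμt _⟩
    have htendR : Filter.Tendsto (fun n : ℕ => (s + 1/((n:ℝ)+1)) + (μ (Set.Iic (s + 1/(n+1)))).toReal)
        Filter.atTop (nhds (s + (μ (Set.Iic s)).toReal)) := by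
      have h1 : Filter.Tendsto (fun n : ℕ => (μ (Set.Iic (s + 1/(n+1)))).toReal)
          Filter.atTop (nhds (μ (Set.Iic s)).toReal) :=
        (ENNReal.tendsto_toReal (hμt _)).comp htend
      have h2 : Filter.Tendsto (fun n : ℕ => s + 1/((n:ℝ)+1)) Filter.atTop (nhds s) := by
        have := tendsto_one_div_add_atTop_nhds_zero_nat (𝕜 := ℝ)
        have h3 := Filter.Tendsto.const_add s this
        simpa using h3
      exact h2.add h1
    have hev : ∀ᶠ n : ℕ in Filter.atTop,
        (s + 1/((n:ℝ)+1)) + (μ (Set.Iic (s + 1/(n+1)))).toReal < ω :=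
      htendR.eventually (eventually_lt_nhds h)
    obtain ⟨n, hn⟩ := hev.exists
    have hmem : s + 1/((n:ℝ)+1) ∈ {x : ℝ | x + (μ (Set.Iic x)).toReal < ω} := hn
    have hle := le_csSup hbdd hmem
    rw [← hXs] at hle
    have := hv n
    linarith
  -- decomposition μ(Iic s) = μ(Iio s) + μ{s}
  have hdec : (μ (Set.Iic s)).toReal = (μ (Set.Iio s)).toReal + (μ {s}).toReal := by
    have h1 : μ (Set.Iic s) = μ (Set.Iio s) + μ {s} := by
      rw [← Set.Iio_union_right, measure_union (by simp) (measurableSet_singleton s)]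
    rw [h1, ENNReal.toReal_add (hμt _) (hμt _)]
  set a := s + (μ (Set.Iio s)).toReal with ha
  set b := (μ {s}).toReal with hb
  have hb0 : 0 ≤ b := ENNReal.toReal_nonneg
  have hωa : a ≤ ω := hlow
  have hωb : ω ≤ a + b := by rw [ha, hb]; linarith [hup, hdec]
  rcases eq_or_lt_of_le hb0 with hbe | hbp
  · refine ⟨0, ⟨le_refl 0, zero_le_one⟩, ?_⟩
    have : ω = a := le_antisymm (by linarith) hωa
    linarith
  · refine ⟨(ω - a)/b, ⟨div_nonneg (by linarith) hb0, ?_⟩, ?_⟩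
    · rw [div_le_one hbp]; linarith
    · field_simp
      ring
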